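/- For l ∈ ℕ let Q^n_l = conv( (l·[−1,1]^{n−1} × {0}) ∪ {e_n, −e_n} ) ⊂ ℝ^n, where e_n is the n-th standard unit vector. For n ≥ 3 and any constant c > 0 there exists l ∈ ℕ such that g_{n−2}(Q^n_l) > c · σ_{n−2}(Q^n_l). -/

import Mathlib

open Finset Pointwise MeasureTheory

/-- The integer lattice `ℤⁿ` viewed as a subset of `ℝⁿ`. -/
def intLattice (n : ℕ) : Set (Fin n → ℝ) := {x | ∀ j, ∃ m : ℤ, x j = (m : ℝ)}

/-- The `i`-th successive minimum (for `1 ≤ i ≤ n`) of a set `K ⊆ ℝⁿ` with respect to `ℤⁿ`: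
the infimum of all `l > 0` such that `l • K` contains at least `i` linearly independent
lattice points. -/
noncomputable def succMinima {n : ℕ} (K : Set (Fin n → ℝ)) (i : ℕ) : ℝ :=
  sInf {l : ℝ | 0 < l ∧
    i ≤ Module.finrank ℝ (Submodule.span ℝ ((l • K) ∩ intLattice n))}

/-- The slab `l·[−1,1]^{n−1} × {0} ⊆ ℝⁿ`: the cube of side `2l` in the first `n−1`
coordinates, with last coordinate `0`. -/
def cubeSlice (n l : ℕ) : Set (Fin n → ℝ) :=
  {x | ∀ j : Fin n, ((j : ℕ) < n - 1 → |x j| ≤ (l : ℝ)) ∧ ((j : ℕ) = n - 1 → x j = 0)}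

/-- The `n`-th standard unit vector of `ℝⁿ` (i.e. the last coordinate vector). -/
def lastUnitVec (n : ℕ) : Fin n → ℝ := fun j => if (j : ℕ) = n - 1 then 1 else 0

/-- The bipyramid `Q^n_l = conv( (l·[−1,1]^{n−1} × {0}) ∪ {e_n, −e_n} )`. -/
def Qnl (n l : ℕ) : Set (Fin n → ℝ) :=
  convexHull ℝ (cubeSlice n l ∪ {lastUnitVec n, -lastUnitVec n})

/-- Proposition: for `n ≥ 3` and any constant `c > 0` there is an `l ∈ ℕ` with
`g_{n−2}(Q^n_l) > c · σ_{n−2}(Q^n_l)`, where `σ_i(Q^n_l)` is the `i`-th elementary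
symmetric polynomial in `1/λ_1(DQ^n_l),…,1/λ_n(DQ^n_l)`. -/
theorem Qnl_eq (n l : ℕ) (hl : 1 ≤ l) (N : Fin n) (hN : (N : ℕ) = n - 1) :
    Qnl n l = {x : Fin n → ℝ | |x N| ≤ 1 ∧
      ∀ j : Fin n, (j : ℕ) < n - 1 → |x j| ≤ (l : ℝ) * (1 - |x N|)} := by
  have hl0 : (0:ℝ) ≤ l := by positivity
  have hl1 : (1:ℝ) ≤ l := by exact_mod_cast hl
  have hjcases : ∀ j : Fin n, (j : ℕ) < n - 1 ∨ j = N := by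
    intro j
    rcases lt_or_ge (j : ℕ) (n - 1) with h | h
    · exact Or.inl h
    · right; apply Fin.ext; have := j.isLt; omega
  apply le_antisymm
  · apply convexHull_min
    · rintro x (hx | hx)
      · refine ⟨by rw [(hx N).2 hN]; simp, ?_⟩
        intro j hj
        rw [(hx N).2 hN]
        simpa using (hx j).1 hj
      · simp only [Set.mem_insert_iff, Set.mem_singleton_iff] at hx
        have hNval : lastUnitVec n N = 1 := by simp [lastUnitVec, hN]
        rcases hx with rfl | rfl
        · refine ⟨by rw [hNval]; simp, ?_⟩
          intro j hj
          have : lastUnitVec n j = 0 := by simp [lastUnitVec]; omega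
          rw [this, hNval]; simp
        · refine ⟨by simp [hNval], ?_⟩
          intro j hj
          have : lastUnitVec n j = 0 := by simp [lastUnitVec]; omega
          simp [this, hNval]
    · intro x hx y hy a b ha hb hab
      obtain ⟨hx1, hx2⟩ := hx
      obtain ⟨hy1, hy2⟩ := hy
      have key : |(a • x + b • y) N| ≤ a * |x N| + b * |y N| := by
        simp only [Pi.add_apply, Pi.smul_apply, smul_eq_mul]
        calc |a * x N + b * y N| ≤ |a * x N| + |b * y N| := abs_add_le _ _
          _ = a * |x N| + b * |y N| := by
              rw [abs_mul, abs_mul, abs_of_nonneg ha, abs_of_nonneg hb]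
      constructor
      · nlinarith [abs_nonneg (x N), abs_nonneg (y N)]
      · intro j hj
        have h1 := hx2 j hj
        have h2 := hy2 j hj
        have key2 : |(a • x + b • y) j| ≤ a * |x j| + b * |y j| := by
          simp only [Pi.add_apply, Pi.smul_apply, smul_eq_mul]
          calc |a * x j + b * y j| ≤ |a * x j| + |b * y j| := abs_add_le _ _
            _ = a * |x j| + b * |y j| := by
                rw [abs_mul, abs_mul, abs_of_nonneg ha, abs_of_nonneg hb]
        nlinarith [mul_le_mul_of_nonneg_left key hl0, mul_le_mul_of_nonneg_left h1 ha,
          mul_le_mul_of_nonneg_left h2 hb]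
  · intro x hx
    obtain ⟨h1, h2⟩ := hx
    set t := x N with ht
    by_cases hs : |t| = 1
    · have hx0 : ∀ j : Fin n, (j : ℕ) < n - 1 → x j = 0 := by
        intro j hj
        have h3 := h2 j hj
        rw [hs] at h3
        simp at h3
        exact h3
      apply subset_convexHull ℝ _
      right
      rcases (abs_eq (by norm_num : (0:ℝ) ≤ 1)).mp hs with h | h
      · left
        funext j
        by_cases hj : (j : ℕ) < n - 1
        · have hne : (j : ℕ) ≠ n - 1 := by omega
          rw [hx0 j hj]; simp [lastUnitVec, hne]
        · have hjeq : j = N := (hjcases j).resolve_left hj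
          subst hjeq
          rw [← ht, h]; simp [lastUnitVec, hN]
      · right
        funext j
        by_cases hj : (j : ℕ) < n - 1
        · have hne : (j : ℕ) ≠ n - 1 := by omega
          rw [hx0 j hj]; simp [lastUnitVec, hne]
        · have hjeq : j = N := (hjcases j).resolve_left hj
          subst hjeq
          rw [← ht, h]; simp [lastUnitVec, hN]
    · have hs' : |t| < 1 := lt_of_le_of_ne h1 hs
      have h1t : (0:ℝ) < 1 - |t| := by linarith
      set y : Fin n → ℝ := fun j => if (j : ℕ) = n - 1 then 0 else x j / (1 - |t|) with hy
      have hyc : y ∈ cubeSlice n l := by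
        intro j
        constructor
        · intro hj
          have hjne : (j : ℕ) ≠ n - 1 := by omega
          simp only [hy, if_neg hjne]
          rw [abs_div, abs_of_pos h1t, div_le_iff₀ h1t]
          calc |x j| ≤ l * (1 - |t|) := h2 j hj
            _ = (l : ℝ) * (1 - |t|) := rfl
        · intro hj; simp [hy, hj]
      set e : Fin n → ℝ := if 0 ≤ t then lastUnitVec n else -lastUnitVec n with he
      have hec : e ∈ cubeSlice n l ∪ ({lastUnitVec n, -lastUnitVec n} : Set (Fin n → ℝ)) := by
        right
        by_cases h : 0 ≤ t
        · left; simp [he, h]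
        · right; simp [he, h]
      have heN : e N = if 0 ≤ t then 1 else -1 := by
        by_cases h : 0 ≤ t <;> simp [he, h, lastUnitVec, hN]
      have hxeq : x = (1 - |t|) • y + |t| • e := by
        funext j
        by_cases hj : (j : ℕ) < n - 1
        · have hjne : (j : ℕ) ≠ n - 1 := by omega
          have he0 : e j = 0 := by
            by_cases h : 0 ≤ t <;> simp [he, h, lastUnitVec, hjne]
          simp only [Pi.add_apply, Pi.smul_apply, smul_eq_mul, hy, if_neg hjne, he0]
          field_simp
          simp
        · have hjeq : j = N := (hjcases j).resolve_left hj
          subst hjeq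
          simp only [Pi.add_apply, Pi.smul_apply, smul_eq_mul, hy, if_pos hN, heN, ← ht]
          by_cases h : 0 ≤ t
          · rw [if_pos h, abs_of_nonneg h]; ring
          · rw [if_neg h, abs_of_neg (lt_of_not_ge h)]; ring
      rw [hxeq]
      exact (convex_convexHull ℝ (cubeSlice n l ∪ {lastUnitVec n, -lastUnitVec n}))
        (subset_convexHull ℝ _ (Or.inl hyc))
        (subset_convexHull ℝ _ hec) (by linarith) (abs_nonneg t) (by ring)

theorem mem_smul_Qnl (n l k : ℕ) (hl : 1 ≤ l) (hk : 1 ≤ k) (N : Fin n) (hN : (N : ℕ) = n - 1)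
    (x : Fin n → ℝ) :
    x ∈ (k : ℝ) • Qnl n l ↔ |x N| ≤ (k : ℝ) ∧
      ∀ j : Fin n, (j : ℕ) < n - 1 → |x j| ≤ (l : ℝ) * ((k : ℝ) - |x N|) := by
  have hk0 : (0:ℝ) < k := by exact_mod_cast hk
  rw [Set.mem_smul_set_iff_inv_smul_mem₀ (ne_of_gt hk0), Qnl_eq n l hl N hN]
  simp only [Set.mem_setOf_eq, Pi.smul_apply, smul_eq_mul]
  have habs : ∀ a : ℝ, |(k:ℝ)⁻¹ * a| = (k:ℝ)⁻¹ * |a| := by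
    intro a
    rw [abs_mul, abs_inv, abs_of_pos hk0]
  have hki : (k:ℝ) * (k:ℝ)⁻¹ = 1 := mul_inv_cancel₀ (ne_of_gt hk0)
  have key1 : ((k:ℝ)⁻¹ * |x N| ≤ 1) ↔ |x N| ≤ (k:ℝ) := by
    constructor <;> intro h
    · nlinarith
    · nlinarith
  have key2 : ∀ a : ℝ, ((k:ℝ)⁻¹ * a ≤ (l:ℝ) * (1 - (k:ℝ)⁻¹ * |x N|) ↔
      a ≤ (l:ℝ) * ((k:ℝ) - |x N|)) := by
    intro a
    have e1 : (l:ℝ) * (1 - (k:ℝ)⁻¹ * |x N|) = ((l:ℝ) * ((k:ℝ) - |x N|)) * (k:ℝ)⁻¹ := by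
      field_simp
    rw [e1, show (k:ℝ)⁻¹ * a = a * (k:ℝ)⁻¹ from mul_comm _ _,
      mul_le_mul_iff_of_pos_right (inv_pos.mpr hk0)]
  simp only [habs]
  constructor
  · rintro ⟨ha, hb⟩
    exact ⟨key1.mp ha, fun j hj => (key2 _).mp (hb j hj)⟩
  · rintro ⟨ha, hb⟩
    exact ⟨key1.mpr ha, fun j hj => (key2 _).mpr (hb j hj)⟩

theorem sum_Icc_natAbs (k : ℕ) (f : ℕ → ℕ) :
    ∑ t ∈ Finset.Icc (-(k:ℤ)) (k:ℤ), f t.natAbs = f 0 + 2 * ∑ m ∈ Finset.Icc 1 k, f m := by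
  induction k with
  | zero => simp
  | succ k ih =>
    rw [show ((k+1:ℕ):ℤ) = (k:ℤ)+1 by push_cast; ring]
    have h1 : Finset.Icc (-(k+1:ℤ)) (k+1:ℤ) =
        insert (-(k+1:ℤ)) (insert ((k+1:ℤ)) (Finset.Icc (-(k:ℤ)) (k:ℤ))) := by
      ext t
      simp only [Finset.mem_Icc, Finset.mem_insert]
      omega
    have h2 : (-(k+1:ℤ)) ∉ insert ((k+1:ℤ)) (Finset.Icc (-(k:ℤ)) (k:ℤ)) := by
      simp only [Finset.mem_insert, Finset.mem_Icc]
      omega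
    have h3 : ((k+1:ℤ)) ∉ Finset.Icc (-(k:ℤ)) (k:ℤ) := by
      simp only [Finset.mem_Icc]
      omega
    rw [h1, Finset.sum_insert h2, Finset.sum_insert h3, ih]
    have h4 : Finset.Icc 1 (k+1) = insert (k+1) (Finset.Icc 1 k) := by
      ext m
      simp only [Finset.mem_Icc, Finset.mem_insert]
      omega
    have h5 : (k+1) ∉ Finset.Icc 1 k := by simp
    rw [h4, Finset.sum_insert h5]
    have h6 : ((-(k+1:ℤ))).natAbs = k+1 := by omega
    have h7 : (((k:ℤ)+1)).natAbs = k+1 := by omega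
    rw [h6, h7]
    ring

theorem count_eq (n l k : ℕ) (hn : 3 ≤ n) (hl : 1 ≤ l) (hk : 1 ≤ k) :
    Nat.card ↥((k : ℝ) • Qnl n l ∩ intLattice n) =
      (2*l*k+1)^(n-1) + 2 * ∑ m ∈ Finset.range k, (2*l*m+1)^(n-1) := by
  classical
  set N : Fin n := ⟨n-1, by omega⟩ with hNdef
  have hN : (N : ℕ) = n - 1 := rfl
  set P : (Fin n → ℤ) → Prop := fun z => |z N| ≤ (k:ℤ) ∧
    ∀ j : Fin n, (j:ℕ) < n - 1 → |z j| ≤ (l:ℤ) * ((k:ℤ) - |z N|) with hP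
  set Z : Finset (Fin n → ℤ) :=
    (Finset.Icc (fun _ => -((l:ℤ)*(k:ℤ))) (fun _ => (l:ℤ)*(k:ℤ))).filter P with hZ
  have hlk1 : (k:ℤ) ≤ (l:ℤ)*(k:ℤ) :=
    le_mul_of_one_le_left (by positivity) (by exact_mod_cast hl)
  have hmem : ∀ z : Fin n → ℤ, z ∈ Z ↔ P z := by
    intro z
    rw [hZ, Finset.mem_filter]
    constructor
    · exact fun h => h.2
    · intro h
      refine ⟨?_, h⟩
      obtain ⟨h1, h2⟩ := h
      rw [Finset.mem_Icc]
      have hb : ∀ j : Fin n, -((l:ℤ)*(k:ℤ)) ≤ z j ∧ z j ≤ (l:ℤ)*(k:ℤ) := by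
        intro j
        by_cases hj : (j:ℕ) < n - 1
        · have h3 := abs_le.mp (h2 j hj)
          have h4 : (l:ℤ) * ((k:ℤ) - |z N|) ≤ (l:ℤ)*(k:ℤ) :=
            mul_le_mul_of_nonneg_left (by have := abs_nonneg (z N); omega) (by positivity)
          constructor <;> linarith
        · have hj2 : j = N := by
            apply Fin.ext
            have := j.isLt
            simp only [hN]
            omega
          subst hj2
          have h3 := abs_le.mp h1
          constructor <;> linarith
      exact ⟨fun j => (hb j).1, fun j => (hb j).2⟩
  have hcast : ((k : ℝ) • Qnl n l ∩ intLattice n) =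
      ↑(Z.image (fun z => fun j => ((z j : ℤ) : ℝ))) := by
    ext x
    simp only [Set.mem_inter_iff, Finset.coe_image, Set.mem_image, Finset.mem_coe]
    constructor
    · rintro ⟨hx1, hx2⟩
      choose m hm using hx2
      refine ⟨m, ?_, by funext j; exact (hm j).symm⟩
      rw [hmem]
      rw [mem_smul_Qnl n l k hl hk N hN] at hx1
      obtain ⟨ha, hb⟩ := hx1
      constructor
      · have h5 : |((m N : ℤ):ℝ)| ≤ (k:ℝ) := by rw [← hm N]; exact ha
        exact_mod_cast h5
      · intro j hj
        have h5 : |((m j : ℤ):ℝ)| ≤ (l:ℝ)*((k:ℝ) - |((m N : ℤ):ℝ)|) := by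
          rw [← hm N, ← hm j]; exact hb j hj
        exact_mod_cast h5
    · rintro ⟨z, hz, rfl⟩
      rw [hmem] at hz
      obtain ⟨h1, h2⟩ := hz
      constructor
      · rw [mem_smul_Qnl n l k hl hk N hN]
        constructor
        · exact_mod_cast h1
        · intro j hj
          exact_mod_cast h2 j hj
      · intro j
        exact ⟨z j, rfl⟩
  have hcard1 : Nat.card ↥((k : ℝ) • Qnl n l ∩ intLattice n) = Z.card := by
    rw [hcast, Nat.card_coe_set_eq, Set.ncard_coe_finset]
    apply Finset.card_image_of_injective
    intro z w h
    funext j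
    have h2 : ((z j : ℤ):ℝ) = ((w j : ℤ):ℝ) := congrFun h j
    exact_mod_cast h2
  rw [hcard1]
  have hZcard : Z.card =
      ∑ t ∈ Finset.Icc (-(k:ℤ)) (k:ℤ), (2*l*(k - t.natAbs)+1)^(n-1) := by
    rw [Finset.card_eq_sum_card_fiberwise (f := fun z => z N)
      (t := Finset.Icc (-(k:ℤ)) (k:ℤ))
      (fun z hz => by rw [Finset.mem_coe, hmem] at hz; rw [Finset.mem_coe, Finset.mem_Icc]; exact abs_le.mp hz.1)]
    apply Finset.sum_congr rfl
    intro t htmem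
    rw [Finset.mem_Icc] at htmem
    have htk : t.natAbs ≤ k := by omega
    set M : ℤ := (l:ℤ) * ((k:ℤ) - |t|) with hM
    have habst : |t| ≤ (k:ℤ) := abs_le.mpr ⟨htmem.1, htmem.2⟩
    have hM0 : 0 ≤ M := mul_nonneg (by positivity) (by linarith)
    have hfib : Z.filter (fun z => z N = t) =
        Finset.Icc (fun j => if j = N then t else -M) (fun j => if j = N then t else M) := by
      ext z
      rw [Finset.mem_filter, hmem, Finset.mem_Icc]
      constructor
      · rintro ⟨⟨h1, h2⟩, hzN⟩
        constructor
        · intro j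
          show (if j = N then t else -M) ≤ z j
          by_cases hj : j = N
          · subst hj; simp [hzN]
          · have hjlt : (j:ℕ) < n - 1 := by
              have := j.isLt
              have : (j:ℕ) ≠ n - 1 := fun hc => hj (Fin.ext (by rw [hc, hN]))
              omega
            have h3 := abs_le.mp (h2 j hjlt)
            rw [if_neg hj]
            rw [hzN] at h3
            linarith [h3.1]
        · intro j
          show z j ≤ (if j = N then t else M)
          by_cases hj : j = N
          · subst hj; simp [hzN]
          · have hjlt : (j:ℕ) < n - 1 := by
              have := j.isLt
              have : (j:ℕ) ≠ n - 1 := fun hc => hj (Fin.ext (by rw [hc, hN]))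
              omega
            have h3 := abs_le.mp (h2 j hjlt)
            rw [if_neg hj]
            rw [hzN] at h3
            linarith [h3.2]
      · rintro ⟨hlo, hhi⟩
        have hzN : z N = t := by
          have h1 : t ≤ z N := by simpa using hlo N
          have h2 : z N ≤ t := by simpa using hhi N
          omega
        refine ⟨⟨by rw [hzN]; exact habst, ?_⟩, hzN⟩
        intro j hj
        have hjne : j ≠ N := by
          intro hc
          rw [hc, hN] at hj
          omega
        have h1 : -M ≤ z j := by simpa [if_neg hjne] using hlo j
        have h2 : z j ≤ M := by simpa [if_neg hjne] using hhi j
        rw [hzN, abs_le]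
        exact ⟨h1, h2⟩
    rw [hfib, Pi.card_Icc]
    have hprod : ∀ j : Fin n,
        (Finset.Icc (if j = N then t else -M) (if j = N then t else M)).card
        = if j = N then 1 else (2*l*(k - t.natAbs)+1) := by
      intro j
      by_cases hj : j = N
      · rw [if_pos hj, if_pos hj, if_pos hj, Int.card_Icc]
        omega
      · rw [if_neg hj, if_neg hj, if_neg hj, Int.card_Icc]
        have he : M + 1 - (-M) = ((2*l*(k - t.natAbs)+1 : ℕ) : ℤ) := by
          rw [hM]
          have h1 : ((k:ℤ) - |t|) = ((k - t.natAbs : ℕ) : ℤ) := by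
            rw [Int.abs_eq_natAbs]
            omega
          rw [h1]
          push_cast
          ring
        rw [he, Int.toNat_natCast]
    rw [Finset.prod_congr rfl (fun j _ => hprod j)]
    rw [← Finset.mul_prod_erase Finset.univ _ (Finset.mem_univ N)]
    rw [if_pos rfl, one_mul]
    rw [Finset.prod_congr rfl (fun j hj => if_neg (Finset.ne_of_mem_erase hj))]
    rw [Finset.prod_const]
    congr 1
    rw [Finset.card_erase_of_mem (Finset.mem_univ N), Finset.card_univ, Fintype.card_fin]
  rw [hZcard]
  have h8 := sum_Icc_natAbs k (fun m => (2*l*(k-m)+1)^(n-1))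
  rw [h8]
  have h9 : ∑ m ∈ Finset.Icc 1 k, (2*l*(k-m)+1)^(n-1)
      = ∑ m ∈ Finset.range k, (2*l*m+1)^(n-1) := by
    have h10 : Finset.Icc 1 k = Finset.Ico 1 (k+1) := by
      ext m; simp [Finset.mem_Icc, Finset.mem_Ico]
    rw [h10, Finset.sum_Ico_eq_sum_range]
    have h11 : ∀ i, 2*l*(k-(1+i))+1 = 2*l*(k-1-i)+1 := by
      intro i; congr 1; congr 1; omega
    rw [Finset.sum_congr rfl (fun i _ => by rw [h11 i])]
    rw [show k+1-1 = k from rfl]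
    exact Finset.sum_range_reflect (fun m => (2*l*m+1)^(n-1)) k
  rw [h9, Nat.sub_zero]

noncomputable def coefT (j i : ℕ) : ℚ :=
  if 1 ≤ i ∧ i ≤ j+1 then bernoulli (j+1-i) * ((j+1).choose i) / (j+1) else 0

noncomputable def coefA (n l i : ℕ) : ℚ :=
  (if i < n then ((n-1).choose i : ℚ) * (2*l)^i else 0) +
  2 * ∑ j ∈ Finset.range n, ((n-1).choose j : ℚ) * (2*l)^j * coefT j i

theorem faulhaber' (k j : ℕ) :
    (∑ m ∈ Finset.range k, (m:ℚ)^j) =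
      ∑ i ∈ Finset.Icc 1 (j+1), bernoulli (j+1-i) * ((j+1).choose i) / (j+1) * (k:ℚ)^i := by
  rw [sum_range_pow]
  rw [← Finset.sum_range_reflect]
  have h10 : Finset.Icc 1 (j+1) = Finset.Ico 1 (j+2) := by
    ext i; simp only [Finset.mem_Icc, Finset.mem_Ico]; omega
  rw [h10, Finset.sum_Ico_eq_sum_range]
  rw [show j+2-1 = j+1 from rfl]
  apply Finset.sum_congr rfl
  intro i hi
  rw [Finset.mem_range] at hi
  have e1 : j+1-1-i = j-i := by omega
  have e2 : j+1-(1+i) = j-i := by omega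
  have e3 : j+1-(j-i) = i+1 := by omega
  have e4 : (j+1).choose (j-i) = (j+1).choose (1+i) := by
    rw [show j - i = (j+1) - (1+i) by omega]
    exact Nat.choose_symm (by omega)
  rw [e1, e2, e3, e4]
  ring

theorem faulhaber2 (k j : ℕ) :
    (∑ m ∈ Finset.range k, (m:ℚ)^j) = ∑ i ∈ Finset.Icc 1 (j+1), coefT j i * (k:ℚ)^i := by
  rw [faulhaber']
  apply Finset.sum_congr rfl
  intro i hi
  rw [Finset.mem_Icc] at hi
  rw [coefT, if_pos ⟨hi.1, hi.2⟩]

theorem binom_expand (n : ℕ) (hn : 1 ≤ n) (a b : ℚ) :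
    ∑ i ∈ Finset.range n, ((n-1).choose i : ℚ) * a^i * b^i = (a*b+1)^(n-1) := by
  rw [add_pow]
  rw [show n-1+1 = n by omega]
  apply Finset.sum_congr rfl
  intro i hi
  rw [mul_pow]
  ring

theorem poly_identity (n l k : ℕ) (hn : 3 ≤ n) :
    (((2*l*k+1)^(n-1) + 2 * ∑ m ∈ Finset.range k, (2*l*m+1)^(n-1) : ℕ) : ℚ) =
      ∑ i ∈ Finset.range (n+1), coefA n l i * (k:ℚ)^i := by
  simp only [coefA, add_mul, Finset.sum_add_distrib]
  have hA : ∑ i ∈ Finset.range (n+1),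
      (if i < n then ((n-1).choose i : ℚ) * (2*(l:ℚ))^i else 0) * (k:ℚ)^i
      = (2*(l:ℚ)*(k:ℚ)+1)^(n-1) := by
    have e1 : ∀ i, (if i < n then ((n-1).choose i : ℚ) * (2*(l:ℚ))^i else 0) * (k:ℚ)^i
        = if i < n then ((n-1).choose i : ℚ) * (2*(l:ℚ))^i * (k:ℚ)^i else 0 := by
      intro i; split <;> simp
    rw [Finset.sum_congr rfl (fun i _ => e1 i), ← Finset.sum_filter]
    have e2 : (Finset.range (n+1)).filter (· < n) = Finset.range n := by
      ext i; simp only [Finset.mem_filter, Finset.mem_range]; omega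
    rw [e2]
    exact binom_expand n (by omega) (2*(l:ℚ)) (k:ℚ)
  have hinner : ∀ j ∈ Finset.range n,
      ∑ i ∈ Finset.range (n+1), coefT j i * (k:ℚ)^i = ∑ m ∈ Finset.range k, (m:ℚ)^j := by
    intro j hj
    rw [Finset.mem_range] at hj
    rw [faulhaber2 k j]
    symm
    apply Finset.sum_subset
    · intro i hi
      rw [Finset.mem_Icc] at hi
      rw [Finset.mem_range]
      omega
    · intro i _ hni
      rw [Finset.mem_Icc] at hni
      rw [coefT, if_neg (by omega)]
      ring
  have hB : ∑ i ∈ Finset.range (n+1),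
      (2 * ∑ j ∈ Finset.range n, ((n-1).choose j : ℚ) * (2*(l:ℚ))^j * coefT j i) * (k:ℚ)^i
      = 2 * ∑ m ∈ Finset.range k, (2*(l:ℚ)*(m:ℚ)+1)^(n-1) := by
    have step1 : ∀ i, (2 * ∑ j ∈ Finset.range n, ((n-1).choose j : ℚ) * (2*(l:ℚ))^j * coefT j i) * (k:ℚ)^i
        = 2 * ∑ j ∈ Finset.range n,
            ((n-1).choose j : ℚ) * (2*(l:ℚ))^j * (coefT j i * (k:ℚ)^i) := by
      intro i
      rw [mul_assoc, Finset.sum_mul]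
      congr 1
      apply Finset.sum_congr rfl
      intro j _
      ring
    rw [Finset.sum_congr rfl (fun i _ => step1 i), ← Finset.mul_sum, Finset.sum_comm]
    congr 1
    calc ∑ j ∈ Finset.range n, ∑ i ∈ Finset.range (n+1),
          ((n-1).choose j : ℚ) * (2*(l:ℚ))^j * (coefT j i * (k:ℚ)^i)
        = ∑ j ∈ Finset.range n, ((n-1).choose j : ℚ) * (2*(l:ℚ))^j * ∑ m ∈ Finset.range k, (m:ℚ)^j := by
          apply Finset.sum_congr rfl
          intro j hj
          rw [← Finset.mul_sum, hinner j hj]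
      _ = ∑ j ∈ Finset.range n, ∑ m ∈ Finset.range k,
            ((n-1).choose j : ℚ) * (2*(l:ℚ))^j * (m:ℚ)^j := by
          apply Finset.sum_congr rfl
          intro j _
          rw [Finset.mul_sum]
      _ = ∑ m ∈ Finset.range k, ∑ j ∈ Finset.range n,
            ((n-1).choose j : ℚ) * (2*(l:ℚ))^j * (m:ℚ)^j := Finset.sum_comm
      _ = ∑ m ∈ Finset.range k, (2*(l:ℚ)*(m:ℚ)+1)^(n-1) := by
          apply Finset.sum_congr rfl
          intro m _
          exact binom_expand n (by omega) (2*(l:ℚ)) (m:ℚ)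
  push_cast
  rw [hA, hB]

theorem coefA_val (n l : ℕ) (hn : 3 ≤ n) :
    coefA n l (n-2) = ((n:ℚ)-1) * ((2*(l:ℚ))^(n-1) / 6 + (2*(l:ℚ))^(n-3)) := by
  have hb2 : bernoulli 2 = (1:ℚ)/6 := by
    rw [bernoulli_eq_bernoulli'_of_ne_one (by norm_num), bernoulli'_two]
  have hn0 : (n:ℚ) ≠ 0 := by positivity
  have hge : (3:ℚ) ≤ (n:ℚ) := by exact_mod_cast hn
  have hn1 : (n:ℚ) - 1 ≠ 0 := by
    intro hc; rw [sub_eq_zero] at hc; rw [hc] at hge; norm_num at hge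
  have hn2 : (n:ℚ) - 2 ≠ 0 := by
    intro hc; rw [sub_eq_zero] at hc; rw [hc] at hge; norm_num at hge
  have hcast1 : ((n-1 : ℕ):ℚ) = (n:ℚ)-1 := by
    push_cast [Nat.cast_sub (by omega : 1 ≤ n)]; ring
  have hcast2 : ((n-2 : ℕ):ℚ) = (n:ℚ)-2 := by
    push_cast [Nat.cast_sub (by omega : 2 ≤ n)]; ring
  have hcast3 : ((n-3 : ℕ):ℚ) = (n:ℚ)-3 := by
    push_cast [Nat.cast_sub (by omega : 3 ≤ n)]; ring
  have e5 : (n-1).choose (n-2) = n-1 := by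
    rw [show n-2 = (n-1)-1 by omega, Nat.choose_symm (by omega), Nat.choose_one_right]
  have e6 : (n-1).choose (n-3) = (n-1).choose 2 := by
    rw [show n-3 = (n-1)-2 by omega, Nat.choose_symm (by omega)]
  have e7 : n.choose (n-2) = n.choose 2 := by
    rw [show n-2 = n-2 from rfl]
    conv_lhs => rw [show (n-2 : ℕ) = n - 2 from rfl]
    exact Nat.choose_symm (by omega)
  have hsplit : Finset.range n = Finset.range (n-3) ∪ Finset.Ico (n-3) n := by
    rw [Finset.range_eq_Ico, Finset.range_eq_Ico, Finset.Ico_union_Ico_eq_Ico (by omega) (by omega)]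
  have hdisj : Disjoint (Finset.range (n-3)) (Finset.Ico (n-3) n) := by
    rw [Finset.disjoint_left]
    intro a ha hb
    rw [Finset.mem_range] at ha
    rw [Finset.mem_Ico] at hb
    omega
  rw [coefA, hsplit, Finset.sum_union hdisj]
  have hz : ∑ j ∈ Finset.range (n-3), ((n-1).choose j : ℚ) * (2*(l:ℚ))^j * coefT j (n-2) = 0 := by
    apply Finset.sum_eq_zero
    intro j hj
    rw [Finset.mem_range] at hj
    rw [coefT, if_neg (by omega)]
    ring
  rw [hz, zero_add]
  rw [Finset.sum_Ico_eq_sum_range]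
  rw [show n - (n-3) = 3 by omega]
  rw [Finset.sum_range_succ, Finset.sum_range_succ, Finset.sum_range_succ,
    Finset.sum_range_zero, zero_add]
  rw [show n-3+0 = n-3 by omega, show n-3+1 = n-2 by omega, show n-3+2 = n-1 by omega]
  have hT1 : coefT (n-3) (n-2) = 1 / ((n:ℚ)-2) := by
    rw [coefT, if_pos (by omega)]
    rw [show n-3+1 = n-2 by omega, show n-2-(n-2) = 0 by omega, bernoulli_zero,
      Nat.choose_self, hcast3]
    push_cast
    have : (n:ℚ) - 3 + 1 = (n:ℚ) - 2 := by ring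
    rw [this]
    ring
  have hT2 : coefT (n-2) (n-2) = -1/2 := by
    rw [coefT, if_pos (by omega)]
    rw [show n-2+1 = n-1 by omega, show n-1-(n-2) = 1 by omega, bernoulli_one, e5,
      hcast1, hcast2]
    have : (n:ℚ) - 2 + 1 = (n:ℚ) - 1 := by ring
    rw [this]
    field_simp
  have hT3 : coefT (n-1) (n-2) = ((n:ℚ)-1)/12 := by
    rw [coefT, if_pos (by omega)]
    rw [show n-1+1 = n by omega, show n-(n-2) = 2 by omega, hb2, e7,
      Nat.cast_choose_two, hcast1]
    have : (n:ℚ) - 1 + 1 = (n:ℚ) := by ring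
    rw [this]
    field_simp
    ring
  rw [hT1, hT2, hT3]
  have hc1 : (((n-1).choose (n-3) : ℕ) : ℚ) = ((n:ℚ)-1)*((n:ℚ)-2)/2 := by
    rw [e6, Nat.cast_choose_two, hcast1]
    ring
  have hc2 : (((n-1).choose (n-2) : ℕ) : ℚ) = (n:ℚ)-1 := by rw [e5, hcast1]
  have hc3 : (((n-1).choose (n-1) : ℕ) : ℚ) = 1 := by rw [Nat.choose_self]; norm_num
  rw [if_pos (by omega : n-2 < n), hc1, hc2, hc3]
  have hp2 : (2*(l:ℚ))^(n-2) = (2*(l:ℚ))^(n-3) * (2*(l:ℚ)) := by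
    rw [← pow_succ]
    congr 1
    omega
  have hp1 : (2*(l:ℚ))^(n-1) = (2*(l:ℚ))^(n-3) * (2*(l:ℚ))^2 := by
    rw [← pow_add]
    congr 1
    omega
  rw [hp2, hp1]
  field_simp
  ring

theorem coeff_unique (d : ℕ) (A B : ℕ → ℝ)
    (h : ∀ k : ℕ, 1 ≤ k →
      ∑ i ∈ Finset.range d, A i * (k:ℝ)^i = ∑ i ∈ Finset.range d, B i * (k:ℝ)^i)
    (i : ℕ) (hi : i < d) : A i = B i := by
  set P : Polynomial ℝ :=
    ∑ j ∈ Finset.range d, Polynomial.C (A j - B j) * Polynomial.X ^ j with hPdef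
  have hP0 : P = 0 := by
    apply Polynomial.eq_zero_of_infinite_isRoot
    apply Set.Infinite.mono (s := Set.range (fun k : ℕ => ((k:ℝ)+1)))
    · rintro x ⟨k, rfl⟩
      have hk := h (k+1) (by omega)
      simp only [Set.mem_setOf_eq, Polynomial.IsRoot, hPdef, Polynomial.eval_finset_sum,
        Polynomial.eval_mul, Polynomial.eval_C, Polynomial.eval_pow, Polynomial.eval_X]
      push_cast at hk ⊢
      rw [Finset.sum_congr rfl (fun j _ => by rw [sub_mul] :
        ∀ j ∈ Finset.range d, (A j - B j) * ((k:ℝ)+1)^j = A j * ((k:ℝ)+1)^j - B j * ((k:ℝ)+1)^j)]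
      rw [Finset.sum_sub_distrib]
      rw [sub_eq_zero]
      exact hk
    · apply Set.infinite_of_injective_forall_mem (f := fun k : ℕ => ((k:ℝ)+1))
      · intro a b hab
        simp only [add_left_inj] at hab
        exact_mod_cast hab
      · intro a
        exact Set.mem_range_self a
  have hco : P.coeff i = A i - B i := by
    rw [hPdef, Polynomial.finset_sum_coeff]
    simp only [Polynomial.coeff_C_mul, Polynomial.coeff_X_pow, mul_ite, mul_one, mul_zero]
    rw [Finset.sum_ite_eq]
    rw [if_pos (Finset.mem_range.mpr hi)]
  rw [hP0] at hco
  simp only [Polynomial.coeff_zero] at hco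
  linarith [hco]

theorem sm_bound (n l : ℕ) (hn : 3 ≤ n) (hl : 1 ≤ l) (i : ℕ) (hi : 1 ≤ i) :
    1 / succMinima (Qnl n l - Qnl n l) i ≤ 2*(l:ℝ) := by
  have hl1 : (1:ℝ) ≤ l := by exact_mod_cast hl
  set N : Fin n := ⟨n-1, by omega⟩ with hNdef
  have hN : (N : ℕ) = n - 1 := rfl
  have hQbound : ∀ x ∈ Qnl n l, ∀ j : Fin n, |x j| ≤ (l:ℝ) := by
    intro x hx j
    rw [Qnl_eq n l hl N hN] at hx
    obtain ⟨h1, h2⟩ := hx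
    by_cases hj : (j:ℕ) < n - 1
    · have := h2 j hj
      nlinarith [abs_nonneg (x N)]
    · have hjN : j = N := by
        apply Fin.ext
        have := j.isLt
        simp only [hN]
        omega
      rw [hjN]
      linarith
  set S : Set ℝ := {lam : ℝ | 0 < lam ∧
    i ≤ Module.finrank ℝ (Submodule.span ℝ
      ((lam • (Qnl n l - Qnl n l)) ∩ intLattice n))} with hS
  have hsm : succMinima (Qnl n l - Qnl n l) i = sInf S := rfl
  have hlb : ∀ lam ∈ S, 1/(2*(l:ℝ)) ≤ lam := by
    rintro lam ⟨hpos, hrank⟩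
    by_contra hcon
    push_neg at hcon
    have hsub : (lam • (Qnl n l - Qnl n l)) ∩ intLattice n ⊆ {0} := by
      rintro x ⟨hx1, hx2⟩
      obtain ⟨w, hw, rfl⟩ := hx1
      rw [Set.mem_sub] at hw
      obtain ⟨a, ha, b, hb, hab⟩ := hw
      have hz : ∀ j : Fin n, (lam • w) j = 0 := by
        intro j
        obtain ⟨m, hm0⟩ := hx2 j
        have hm : (lam • w) j = (m:ℝ) := hm0
        have hwj : |w j| ≤ 2*(l:ℝ) := by
          have h1 := hQbound a ha j
          have h2 := hQbound b hb j
          rw [← hab]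
          simp only [Pi.sub_apply]
          calc |a j - b j| ≤ |a j| + |b j| := abs_sub _ _
            _ ≤ 2*l := by linarith
        have habs : |(lam • w) j| < 1 := by
          simp only [Pi.smul_apply, smul_eq_mul, abs_mul, abs_of_pos hpos]
          have h2l : (0:ℝ) < 2*l := by positivity
          have e1 : lam * |w j| ≤ lam * (2*l) := by nlinarith
          have e2 : lam * (2*(l:ℝ)) < 1 := by
            have h3 := mul_lt_mul_of_pos_right hcon h2l
            rw [div_mul_cancel₀ _ (ne_of_gt h2l)] at h3
            exact h3
          linarith
        rw [hm] at habs
        have hmz : m = 0 := by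
          have h3 : |(m:ℝ)| < 1 := habs
          have h4 : |m| < 1 := by exact_mod_cast h3
          have h5 := abs_lt.mp h4
          omega
        rw [hm, hmz]
        simp
      have : lam • w = 0 := funext hz
      rw [Set.mem_singleton_iff]
      exact this
    have hspan : Submodule.span ℝ ((lam • (Qnl n l - Qnl n l)) ∩ intLattice n) = ⊥ := by
      rw [Submodule.span_eq_bot]
      intro x hx
      exact hsub hx
    rw [hspan, finrank_bot] at hrank
    omega
  rcases Set.eq_empty_or_nonempty S with he | hne
  · rw [hsm, he, Real.sInf_empty]
    simp only [div_zero]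
    positivity
  · have h1 : 1/(2*(l:ℝ)) ≤ succMinima (Qnl n l - Qnl n l) i := by
      rw [hsm]
      exact le_csInf hne hlb
    have h2l : (0:ℝ) < 2*l := by positivity
    have h2 : 0 < succMinima (Qnl n l - Qnl n l) i :=
      lt_of_lt_of_le (by positivity) h1
    rw [div_le_iff₀ h2]
    have : (1:ℝ)/(2*l) * (2*l) ≤ succMinima (Qnl n l - Qnl n l) i * (2*l) :=
      mul_le_mul_of_nonneg_right h1 (le_of_lt h2l)
    rw [div_mul_cancel₀] at this
    · linarith [this]
    · exact ne_of_gt h2l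

theorem stmt15 (n : ℕ) (hn : 3 ≤ n)
    (g : ℕ → ℕ → ℝ)
    (hg : ∀ l : ℕ, 1 ≤ l → ∀ k : ℕ, 1 ≤ k →
      (Nat.card ↥((k : ℝ) • Qnl n l ∩ intLattice n) : ℝ) =
        ∑ i ∈ Finset.range (n + 1), g l i * (k : ℝ) ^ i)
    (c : ℝ) (hc : 0 < c) :
    ∃ l : ℕ, 1 ≤ l ∧
      g l (n - 2) > c * ∑ I ∈ (Finset.univ : Finset (Fin n)).powersetCard (n - 2),
        ∏ j ∈ I, 1 / succMinima (Qnl n l - Qnl n l) ((j : ℕ) + 1) := by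
  set l : ℕ := ⌈3*c*(n:ℝ)^2⌉₊ + 1 with hldef
  have hl1 : 1 ≤ l := by omega
  have hlge : 3*c*(n:ℝ)^2 < (l:ℝ) := by
    have h := Nat.le_ceil (3*c*(n:ℝ)^2)
    have h5 : ((⌈3*c*(n:ℝ)^2⌉₊ : ℕ):ℝ) + 1 = (l:ℝ) := by
      rw [hldef]
      push_cast
      ring
    linarith
  clear_value l
  clear hldef
  refine ⟨l, hl1, ?_⟩
  set X : ℝ := 2*(l:ℝ) with hXdef
  have hX : (0:ℝ) < X := by positivity
  -- the value of g l (n-2)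
  have hgv : g l (n-2) = ((coefA n l (n-2) : ℚ) : ℝ) := by
    apply coeff_unique (n+1) (g l) (fun i => ((coefA n l i : ℚ) : ℝ)) ?_ (n-2) (by omega)
    intro k hk
    have h1 : ((Nat.card ↥((k : ℝ) • Qnl n l ∩ intLattice n) : ℕ) : ℝ)
        = ∑ i ∈ Finset.range (n+1), ((coefA n l i : ℚ):ℝ) * (k:ℝ)^i := by
      rw [count_eq n l k hn hl1 hk]
      have h2 : ((((2*l*k+1)^(n-1) + 2 * ∑ m ∈ Finset.range k, (2*l*m+1)^(n-1) : ℕ)) : ℝ)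
          = (((((2*l*k+1)^(n-1) + 2 * ∑ m ∈ Finset.range k, (2*l*m+1)^(n-1) : ℕ) : ℚ)) : ℝ) := by
        push_cast
        ring
      rw [h2, poly_identity n l k hn]
      push_cast
      ring
    rw [← hg l hl1 k hk]
    exact h1
  have hgval : g l (n-2) = ((n:ℝ)-1) * (X^(n-1)/6 + X^(n-3)) := by
    rw [hgv, coefA_val n l hn]
    push_cast
    ring
  -- bound on sigma
  have hnn : ∀ i : ℕ, 0 ≤ 1 / succMinima (Qnl n l - Qnl n l) i := by
    intro i1
    apply one_div_nonneg.mpr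
    unfold succMinima
    apply Real.sInf_nonneg
    rintro x ⟨hx, _⟩
    exact hx.le
  have hterm : ∀ I ∈ (Finset.univ : Finset (Fin n)).powersetCard (n-2),
      ∏ j ∈ I, 1 / succMinima (Qnl n l - Qnl n l) ((j:ℕ)+1) ≤ X^(n-2) := by
    intro I hI
    have hIcard : I.card = n-2 := (Finset.mem_powersetCard.mp hI).2
    calc ∏ j ∈ I, 1 / succMinima (Qnl n l - Qnl n l) ((j:ℕ)+1)
        ≤ ∏ j ∈ I, X := by
          apply Finset.prod_le_prod
          · intro j _; exact hnn _
          · intro j _; exact sm_bound n l hn hl1 ((j:ℕ)+1) (by omega)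
      _ = X^(n-2) := by rw [Finset.prod_const, hIcard]
  have hchoose : ((n.choose (n-2) : ℕ) : ℝ) ≤ (n:ℝ)^2 := by
    have h1 : n.choose (n-2) = n.choose 2 := Nat.choose_symm (by omega)
    have h2 : n.choose 2 = n*(n-1)/2 := Nat.choose_two_right n
    have h3 : n*(n-1)/2 ≤ n*n := le_trans (Nat.div_le_self _ _)
      (Nat.mul_le_mul_left n (by omega))
    have h4 : n.choose (n-2) ≤ n^2 := by
      rw [h1, h2, pow_two]
      exact h3
    exact_mod_cast h4
  have hsigma : ∑ I ∈ (Finset.univ : Finset (Fin n)).powersetCard (n-2),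
      ∏ j ∈ I, 1 / succMinima (Qnl n l - Qnl n l) ((j:ℕ)+1) ≤ (n:ℝ)^2 * X^(n-2) := by
    calc ∑ I ∈ (Finset.univ : Finset (Fin n)).powersetCard (n-2),
        ∏ j ∈ I, 1 / succMinima (Qnl n l - Qnl n l) ((j:ℕ)+1)
        ≤ ∑ _I ∈ (Finset.univ : Finset (Fin n)).powersetCard (n-2), X^(n-2) :=
          Finset.sum_le_sum hterm
      _ = ((n.choose (n-2) : ℕ) : ℝ) * X^(n-2) := by
          rw [Finset.sum_const, Finset.card_powersetCard, Finset.card_univ, Fintype.card_fin,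
            nsmul_eq_mul]
      _ ≤ (n:ℝ)^2 * X^(n-2) := by
          apply mul_le_mul_of_nonneg_right hchoose
          positivity
  -- key numeric inequality
  have h2n : (2:ℝ) ≤ (n:ℝ)-1 := by
    have : (3:ℝ) ≤ (n:ℝ) := by exact_mod_cast hn
    linarith
  have hkey : c * (n:ℝ)^2 < ((n:ℝ)-1) * X / 6 := by
    rw [hXdef]
    have hcn : (0:ℝ) < c * (n:ℝ)^2 := by positivity
    nlinarith [mul_le_mul_of_nonneg_right h2n (show (0:ℝ) ≤ 2*(l:ℝ) by positivity),
      mul_lt_mul_of_pos_left hlge hc]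
  have hXp : (0:ℝ) < X^(n-2) := by positivity
  have hpow : X^(n-1) = X^(n-2) * X := by
    rw [← pow_succ]
    congr 1
    omega
  calc c * ∑ I ∈ (Finset.univ : Finset (Fin n)).powersetCard (n-2),
      ∏ j ∈ I, 1 / succMinima (Qnl n l - Qnl n l) ((j:ℕ)+1)
      ≤ c * ((n:ℝ)^2 * X^(n-2)) := mul_le_mul_of_nonneg_left hsigma hc.le
    _ < (((n:ℝ)-1) * X / 6) * X^(n-2) := by nlinarith [hXp, hkey]
    _ ≤ g l (n-2) := by
        rw [hgval, hpow]
        have h6 : 0 ≤ X^(n-3) := by positivity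
        nlinarith [h6, h2n]
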